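/- Fix ω > 0 and (δr₀, δv₀) ∈ ℝ³ × ℝ³. If γ : ℝ → ℝ³ is twice differentiable, its components (x, y, z) = γ satisfy the Clohessy–Wiltshire equations x'' = 3ω²x + 2ωy', y'' = −2ωx', z'' = −ω²z on ℝ, and γ(0) = δr₀, γ'(0) = δv₀, then for every τ ∈ ℝ one has γ(τ) = M(τ)δr₀ + N(τ)δv₀ and γ'(τ) = S(τ)δr₀ + T(τ)δv₀. (Uniqueness of the solution of the linear Clohessy–Wiltshire system: the matrices M, N, S, T form its state transition matrix.) -/

import Mathlib

open Real Matrix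

section Helpers

lemma harmonic_unique (ω : ℝ) (hω : ω ≠ 0) (f : ℝ → ℝ)
    (hd1 : Differentiable ℝ f) (hd2 : Differentiable ℝ (deriv f))
    (hf : ∀ t, deriv (deriv f) t = -(ω ^ 2 * f t)) :
    ∀ t, f t = f 0 * Real.cos (ω * t) + (deriv f 0 / ω) * Real.sin (ω * t) ∧
      deriv f t = -(f 0 * ω * Real.sin (ω * t)) + deriv f 0 * Real.cos (ω * t) := by
  set a := f 0 with ha
  set b := deriv f 0 with hb
  set φ : ℝ → ℝ := fun t => a * Real.cos (ω * t) + (b / ω) * Real.sin (ω * t) with hφdef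
  set φ' : ℝ → ℝ := fun t => -(a * ω * Real.sin (ω * t)) + b * Real.cos (ω * t) with hφ'def
  have hφ : ∀ t, HasDerivAt φ (φ' t) t := by
    intro t
    have h1 : HasDerivAt (fun t : ℝ => Real.cos (ω * t)) (-(ω * Real.sin (ω * t))) t := by
      simpa [mul_comm, Function.comp_def] using (Real.hasDerivAt_cos (ω * t)).comp t ((hasDerivAt_id t).const_mul ω)
    have h2 : HasDerivAt (fun t : ℝ => Real.sin (ω * t)) (ω * Real.cos (ω * t)) t := by
      simpa [mul_comm, Function.comp_def] using (Real.hasDerivAt_sin (ω * t)).comp t ((hasDerivAt_id t).const_mul ω)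
    have := ((h1.const_mul a).add (h2.const_mul (b / ω)))
    convert this using 1
    · rfl
    · rfl
    · rfl
    field_simp [hφ'def]
    ring
  have hφ' : ∀ t, HasDerivAt φ' (-(ω ^ 2 * φ t)) t := by
    intro t
    have h1 : HasDerivAt (fun t : ℝ => Real.cos (ω * t)) (-(ω * Real.sin (ω * t))) t := by
      simpa [mul_comm, Function.comp_def] using (Real.hasDerivAt_cos (ω * t)).comp t ((hasDerivAt_id t).const_mul ω)
    have h2 : HasDerivAt (fun t : ℝ => Real.sin (ω * t)) (ω * Real.cos (ω * t)) t := by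
      simpa [mul_comm, Function.comp_def] using (Real.hasDerivAt_sin (ω * t)).comp t ((hasDerivAt_id t).const_mul ω)
    have := ((h2.const_mul (a * ω)).neg.add (h1.const_mul b))
    convert this using 1
    · rfl
    · rfl
    · rfl
    simp only [hφdef]
    field_simp [hφdef]
    ring
  have hφd : Differentiable ℝ φ := fun t => (hφ t).differentiableAt
  have hφ'd : Differentiable ℝ φ' := fun t => (hφ' t).differentiableAt
  -- g = f - φ
  set g : ℝ → ℝ := fun t => f t - φ t with hgdef
  have hgd : Differentiable ℝ g := hd1.sub hφd
  have hg' : ∀ t, deriv g t = deriv f t - φ' t := by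
    intro t
    rw [hgdef, deriv_fun_sub (hd1 t) (hφd t), (hφ t).deriv]
  have hg'fun : deriv g = fun t => deriv f t - φ' t := funext hg'
  have hg'd : Differentiable ℝ (deriv g) := by
    rw [hg'fun]; exact hd2.sub hφ'd
  have hg'' : ∀ t, deriv (deriv g) t = -(ω ^ 2 * g t) := by
    intro t
    rw [hg'fun, deriv_fun_sub (hd2 t) (hφ'd t), hf t, (hφ' t).deriv]
    simp [hgdef]; ring
  -- energy
  set E : ℝ → ℝ := fun t => (deriv g t) ^ 2 + ω ^ 2 * (g t) ^ 2 with hEdef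
  have hE' : ∀ t, HasDerivAt E 0 t := by
    intro t
    have h1 : HasDerivAt (fun t => (deriv g t) ^ 2)
        (2 * deriv g t * deriv (deriv g) t) t := by
      have := ((hg'd t).hasDerivAt.mul (hg'd t).hasDerivAt)
      convert this using 1
      · rfl
      · rfl
      · ext s; simp only [Pi.mul_apply]; ring
      · ring
    have h2 : HasDerivAt (fun t => ω ^ 2 * (g t) ^ 2)
        (ω ^ 2 * (2 * g t * deriv g t)) t := by
      have : HasDerivAt (fun t => (g t) ^ 2) (2 * g t * deriv g t) t := by
        have := ((hgd t).hasDerivAt.mul (hgd t).hasDerivAt)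
        convert this using 1
        · rfl
        · rfl
        · ext s; simp only [Pi.mul_apply]; ring
        · ring
      exact this.const_mul _
    have := h1.add h2
    convert this using 1
    · rfl
    · rfl
    · rfl
    rw [hg'' t]; ring
  have hEd : Differentiable ℝ E := fun t => (hE' t).differentiableAt
  have hEconst : ∀ t, E t = E 0 :=
    fun t => is_const_of_deriv_eq_zero hEd (fun t => (hE' t).deriv) t 0
  have hE0 : E 0 = 0 := by
    have hgz : g 0 = 0 := by simp [hgdef, hφdef, ha]
    have hg'z : deriv g 0 = 0 := by
      rw [hg' 0]; simp [hφ'def, hb]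
    simp [hEdef, hgz, hg'z]
  have hgz : ∀ t, g t = 0 ∧ deriv g t = 0 := by
    intro t
    have hE : (deriv g t) ^ 2 + ω ^ 2 * (g t) ^ 2 = 0 := by
      have := hEconst t; rw [hE0] at this; simpa [hEdef] using this
    have h1 : (deriv g t) ^ 2 ≥ 0 := sq_nonneg _
    have h2 : ω ^ 2 * (g t) ^ 2 ≥ 0 := mul_nonneg (sq_nonneg _) (sq_nonneg _)
    constructor
    · have : ω ^ 2 * (g t) ^ 2 = 0 := by linarith
      have hω2 : ω ^ 2 ≠ 0 := pow_ne_zero _ hω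
      have := (mul_eq_zero.mp this).resolve_left hω2
      exact pow_eq_zero_iff (n := 2) (by norm_num) |>.mp this
    · have : (deriv g t) ^ 2 = 0 := by linarith
      exact pow_eq_zero_iff (n := 2) (by norm_num) |>.mp this
  intro t
  obtain ⟨h1, h2⟩ := hgz t
  have hf1 : f t = φ t := by have := h1; simp [hgdef] at this; linarith
  have hf2 : deriv f t = φ' t := by have := hg' t; rw [h2] at this; linarith
  exact ⟨by rw [hf1], by rw [hf2]⟩

end Helpers

/-- Clohessy–Wiltshire state-transition block `M(τ)`. -/
noncomputable def Mcw (ω τ : ℝ) : Matrix (Fin 3) (Fin 3) ℝ :=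
  !![4 - 3 * Real.cos (ω * τ), 0, 0;
     6 * (Real.sin (ω * τ) - ω * τ), 1, 0;
     0, 0, Real.cos (ω * τ)]

/-- Clohessy–Wiltshire state-transition block `N(τ)`. -/
noncomputable def Ncw (ω τ : ℝ) : Matrix (Fin 3) (Fin 3) ℝ :=
  !![Real.sin (ω * τ) / ω, 2 * (1 - Real.cos (ω * τ)) / ω, 0;
     -(2 * (1 - Real.cos (ω * τ)) / ω), 4 * Real.sin (ω * τ) / ω - 3 * τ, 0;
     0, 0, Real.sin (ω * τ) / ω]

/-- Clohessy–Wiltshire state-transition block `S(τ)` (with corrected sign of the (2,1) entry). -/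
noncomputable def Scw (ω τ : ℝ) : Matrix (Fin 3) (Fin 3) ℝ :=
  !![3 * ω * Real.sin (ω * τ), 0, 0;
     6 * ω * (Real.cos (ω * τ) - 1), 0, 0;
     0, 0, -(ω * Real.sin (ω * τ))]

/-- Clohessy–Wiltshire state-transition block `T(τ)`. -/
noncomputable def Tcw (ω τ : ℝ) : Matrix (Fin 3) (Fin 3) ℝ :=
  !![Real.cos (ω * τ), 2 * Real.sin (ω * τ), 0;
     -(2 * Real.sin (ω * τ)), 4 * Real.cos (ω * τ) - 3, 0;
     0, 0, Real.cos (ω * τ)]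


/-- Uniqueness of solutions of the Clohessy–Wiltshire system: if `γ` is twice
differentiable, satisfies the CW equations on `ℝ`, and has `γ(0) = δr₀`, `γ'(0) = δv₀`, then
`γ(τ) = M(τ)δr₀ + N(τ)δv₀` and `γ'(τ) = S(τ)δr₀ + T(τ)δv₀` for all `τ`. -/
theorem cw_solution_unique (ω : ℝ) (hω : 0 < ω) (δr₀ δv₀ : Fin 3 → ℝ)
    (γ : ℝ → Fin 3 → ℝ)
    (hd1 : ∀ i : Fin 3, Differentiable ℝ fun t => γ t i)
    (hd2 : ∀ i : Fin 3, Differentiable ℝ (deriv fun t => γ t i))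
    (hx : ∀ t : ℝ, deriv (deriv fun s => γ s 0) t =
      3 * ω ^ 2 * γ t 0 + 2 * ω * deriv (fun s => γ s 1) t)
    (hy : ∀ t : ℝ, deriv (deriv fun s => γ s 1) t = -(2 * ω * deriv (fun s => γ s 0) t))
    (hz : ∀ t : ℝ, deriv (deriv fun s => γ s 2) t = -(ω ^ 2 * γ t 2))
    (h0 : γ 0 = δr₀)
    (h0' : (fun i => deriv (fun t => γ t i) 0) = δv₀) :
    ∀ τ : ℝ,
      γ τ = (Mcw ω τ).mulVec δr₀ + (Ncw ω τ).mulVec δv₀ ∧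
      (fun i => deriv (fun t => γ t i) τ) = (Scw ω τ).mulVec δr₀ + (Tcw ω τ).mulVec δv₀ := by
  have hωne : ω ≠ 0 := ne_of_gt hω
  have h00 : γ 0 0 = δr₀ 0 := by rw [h0]
  have h01 : γ 0 1 = δr₀ 1 := by rw [h0]
  have h02 : γ 0 2 = δr₀ 2 := by rw [h0]
  have h0'0 : deriv (fun t => γ t 0) 0 = δv₀ 0 := congrFun h0' 0
  have h0'1 : deriv (fun t => γ t 1) 0 = δv₀ 1 := congrFun h0' 1
  have h0'2 : deriv (fun t => γ t 2) 0 = δv₀ 2 := congrFun h0' 2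
  -- z-component
  have hzsol := harmonic_unique ω hωne (fun t => γ t 2) (hd1 2) (hd2 2) hz
  -- conserved quantity c = y' + 2ωx
  set c : ℝ := δv₀ 1 + 2 * ω * δr₀ 0 with hc
  have hcconst : ∀ t, deriv (fun s => γ s 1) t + 2 * ω * γ t 0 = c := by
    have hdh : Differentiable ℝ (fun t => deriv (fun s => γ s 1) t + 2 * ω * γ t 0) :=
      (hd2 1).add ((hd1 0).const_mul _)
    have hdz : ∀ t, deriv (fun t => deriv (fun s => γ s 1) t + 2 * ω * γ t 0) t = 0 := by
      intro t
      rw [deriv_fun_add ((hd2 1) t) (((hd1 0).const_mul (2*ω)) t),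
        deriv_const_mul _ ((hd1 0) t), hy t]
      ring
    intro t
    have := is_const_of_deriv_eq_zero hdh hdz t 0
    rw [this, h00, h0'1]
  -- x-component: u = x - 2c/ω is harmonic
  set u : ℝ → ℝ := fun t => γ t 0 - 2 * c / ω with hu
  have hud : Differentiable ℝ u := (hd1 0).sub_const _
  have hu' : ∀ t, deriv u t = deriv (fun s => γ s 0) t := by
    intro t; rw [hu]; exact deriv_sub_const _
  have hu'fun : deriv u = deriv (fun s => γ s 0) := funext hu'
  have hud2 : Differentiable ℝ (deriv u) := by rw [hu'fun]; exact hd2 0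
  have hu'' : ∀ t, deriv (deriv u) t = -(ω ^ 2 * u t) := by
    intro t
    rw [hu'fun, hx t]
    have hyp : deriv (fun s => γ s 1) t = c - 2 * ω * γ t 0 := by
      have := hcconst t; linarith
    rw [hyp, hu]
    field_simp
    ring
  have husol := harmonic_unique ω hωne u hud hud2 hu''
  have hu0 : u 0 = δr₀ 0 - 2 * c / ω := by rw [hu]; simp [h00]
  have hu'0 : deriv u 0 = δv₀ 0 := by rw [hu' 0, h0'0]
  -- explicit x formula
  have hxval : ∀ t, γ t 0 = (δr₀ 0 - 2 * c / ω) * Real.cos (ω * t)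
      + (δv₀ 0 / ω) * Real.sin (ω * t) + 2 * c / ω := by
    intro t
    have := (husol t).1
    rw [hu0, hu'0] at this
    have hut : u t = γ t 0 - 2 * c / ω := rfl
    rw [hut] at this
    linarith
  have hx'val : ∀ t, deriv (fun s => γ s 0) t =
      -((δr₀ 0 - 2 * c / ω) * ω * Real.sin (ω * t)) + δv₀ 0 * Real.cos (ω * t) := by
    intro t
    have := (husol t).2
    rw [hu0, hu'0, hu' t] at this
    exact this
  -- y' formula
  have hy'val : ∀ t, deriv (fun s => γ s 1) t = c - 2 * ω * γ t 0 := by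
    intro t; have := hcconst t; linarith
  -- y formula: Y antiderivative
  set Y : ℝ → ℝ := fun t => δr₀ 1 + 6 * (Real.sin (ω * t) - ω * t) * δr₀ 0
      - 2 * (1 - Real.cos (ω * t)) / ω * δv₀ 0
      + (4 * Real.sin (ω * t) / ω - 3 * t) * δv₀ 1 with hY
  have hYder : ∀ t, HasDerivAt Y
      (6 * (ω * Real.cos (ω * t) - ω) * δr₀ 0 - 2 * Real.sin (ω * t) * δv₀ 0
        + (4 * Real.cos (ω * t) - 3) * δv₀ 1) t := by
    intro t
    have hcos : HasDerivAt (fun t : ℝ => Real.cos (ω * t)) (-(ω * Real.sin (ω * t))) t := by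
      simpa [mul_comm, Function.comp_def] using (Real.hasDerivAt_cos (ω * t)).comp t ((hasDerivAt_id t).const_mul ω)
    have hsin : HasDerivAt (fun t : ℝ => Real.sin (ω * t)) (ω * Real.cos (ω * t)) t := by
      simpa [mul_comm, Function.comp_def] using (Real.hasDerivAt_sin (ω * t)).comp t ((hasDerivAt_id t).const_mul ω)
    have h1 : HasDerivAt (fun t : ℝ => 6 * (Real.sin (ω*t) - ω*t) * δr₀ 0)
        (6 * (ω * Real.cos (ω*t) - ω) * δr₀ 0) t := by
      have := ((hsin.sub ((hasDerivAt_id t).const_mul ω)).const_mul 6).mul_const (δr₀ 0)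
      convert this using 1; rfl; rfl; rfl; ring
    have h2 : HasDerivAt (fun t : ℝ => 2 * (1 - Real.cos (ω*t)) / ω * δv₀ 0)
        (2 * Real.sin (ω*t) * δv₀ 0) t := by
      have := ((((hasDerivAt_const t (1:ℝ)).sub hcos).const_mul 2).div_const ω).mul_const (δv₀ 0)
      convert this using 1; rfl; rfl; rfl; field_simp; ring
    have h3 : HasDerivAt (fun t : ℝ => (4 * Real.sin (ω*t) / ω - 3 * t) * δv₀ 1)
        ((4 * Real.cos (ω*t) - 3) * δv₀ 1) t := by
      have := (((hsin.const_mul 4).div_const ω).sub ((hasDerivAt_id t).const_mul 3)).mul_const (δv₀ 1)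
      convert this using 1; rfl; rfl; rfl; field_simp
    have := (((hasDerivAt_const t (δr₀ 1)).add h1).sub h2).add h3
    convert this using 1
    · rfl
    · rfl
    · rfl
    ring
  have hyval : ∀ t, γ t 1 = Y t := by
    have hdiff : Differentiable ℝ (fun t => γ t 1 - Y t) :=
      (hd1 1).sub (fun t => (hYder t).differentiableAt)
    have hder0 : ∀ t, deriv (fun t => γ t 1 - Y t) t = 0 := by
      intro t
      rw [deriv_fun_sub ((hd1 1) t) (hYder t).differentiableAt, (hYder t).deriv, hy'val t, hxval t]
      field_simp
      ring
    intro t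
    have := is_const_of_deriv_eq_zero hdiff hder0 t 0
    have hY0 : Y 0 = δr₀ 1 := by simp [hY]
    rw [h01, hY0] at this
    linarith
  have hy'explicit : ∀ t, deriv (fun s => γ s 1) t =
      6 * ω * (Real.cos (ω * t) - 1) * δr₀ 0 - 2 * Real.sin (ω * t) * δv₀ 0
        + (4 * Real.cos (ω * t) - 3) * δv₀ 1 := by
    intro t
    rw [hy'val t, hxval t, hc]
    field_simp
    ring
  -- assemble
  have hz1 : ∀ t, γ t 2 = γ 0 2 * Real.cos (ω * t) + deriv (fun s => γ s 2) 0 / ω * Real.sin (ω * t) :=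
    fun t => (hzsol t).1
  have hz2 : ∀ t, deriv (fun s => γ s 2) t =
      -(γ 0 2 * ω * Real.sin (ω * t)) + deriv (fun s => γ s 2) 0 * Real.cos (ω * t) :=
    fun t => (hzsol t).2
  intro τ
  constructor
  · funext i
    fin_cases i
    · show γ τ 0 = ((Mcw ω τ).mulVec δr₀ + (Ncw ω τ).mulVec δv₀) 0
      simp [Pi.add_apply, Mcw, Ncw, Matrix.mulVec, dotProduct, Fin.sum_univ_three,
        Matrix.cons_val', Matrix.cons_val_zero, Matrix.cons_val_one, Matrix.head_cons,
        Matrix.empty_val', Matrix.cons_val_fin_one, Matrix.head_fin_const,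
        Matrix.cons_val_two, Matrix.tail_cons]
      rw [hxval τ, hc]
      field_simp
      ring
    · show γ τ 1 = ((Mcw ω τ).mulVec δr₀ + (Ncw ω τ).mulVec δv₀) 1
      simp [Pi.add_apply, Mcw, Ncw, Matrix.mulVec, dotProduct, Fin.sum_univ_three,
        Matrix.cons_val', Matrix.cons_val_zero, Matrix.cons_val_one, Matrix.head_cons,
        Matrix.empty_val', Matrix.cons_val_fin_one, Matrix.head_fin_const,
        Matrix.cons_val_two, Matrix.tail_cons]
      rw [hyval τ, hY]
      ring
    · show γ τ 2 = ((Mcw ω τ).mulVec δr₀ + (Ncw ω τ).mulVec δv₀) 2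
      simp [Pi.add_apply, Mcw, Ncw, Matrix.mulVec, dotProduct, Fin.sum_univ_three,
        Matrix.cons_val', Matrix.cons_val_zero, Matrix.cons_val_one, Matrix.head_cons,
        Matrix.empty_val', Matrix.cons_val_fin_one, Matrix.head_fin_const,
        Matrix.cons_val_two, Matrix.tail_cons]
      rw [hz1 τ, h02, h0'2]
      ring
  · funext i
    fin_cases i
    · show deriv (fun t => γ t 0) τ = ((Scw ω τ).mulVec δr₀ + (Tcw ω τ).mulVec δv₀) 0
      simp [Pi.add_apply, Scw, Tcw, Matrix.mulVec, dotProduct, Fin.sum_univ_three,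
        Matrix.cons_val', Matrix.cons_val_zero, Matrix.cons_val_one, Matrix.head_cons,
        Matrix.empty_val', Matrix.cons_val_fin_one, Matrix.head_fin_const,
        Matrix.cons_val_two, Matrix.tail_cons]
      rw [hx'val τ, hc]
      field_simp
      ring
    · show deriv (fun t => γ t 1) τ = ((Scw ω τ).mulVec δr₀ + (Tcw ω τ).mulVec δv₀) 1
      simp [Pi.add_apply, Scw, Tcw, Matrix.mulVec, dotProduct, Fin.sum_univ_three,
        Matrix.cons_val', Matrix.cons_val_zero, Matrix.cons_val_one, Matrix.head_cons,
        Matrix.empty_val', Matrix.cons_val_fin_one, Matrix.head_fin_const,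
        Matrix.cons_val_two, Matrix.tail_cons]
      rw [hy'explicit τ]
      ring
    · show deriv (fun t => γ t 2) τ = ((Scw ω τ).mulVec δr₀ + (Tcw ω τ).mulVec δv₀) 2
      simp [Pi.add_apply, Scw, Tcw, Matrix.mulVec, dotProduct, Fin.sum_univ_three,
        Matrix.cons_val', Matrix.cons_val_zero, Matrix.cons_val_one, Matrix.head_cons,
        Matrix.empty_val', Matrix.cons_val_fin_one, Matrix.head_fin_const,
        Matrix.cons_val_two, Matrix.tail_cons]
      rw [hz2 τ, h02, h0'2]
      ring
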